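/- arXiv:1412.1461 — 9 statements merged into one kernel-verified Lean document; each statement's English description precedes it below -/
import Mathlib

section
/- Let (λ_n)_{n∈ℕ} be a sequence of non-zero complex numbers such that liminf_{n→∞} |λ_{n+1}|/|λ_n| > 2. Then for every non-degenerate line segment I contained in ℂ \ {0} (i.e., I is the closed segment joining two distinct points u ≠ v, and 0 ∉ I), there is no entire function f : ℂ → ℂ such that for every b ∈ I the set {z ↦ f(z + λ_n·b) : n ∈ ℕ} is dense in the space of entire functions with the topology of locally uniform convergence; equivalently, there is no entire f such that for every b ∈ I, every entire g : ℂ → ℂ, every R > 0 and every ε > 0 there exists n with sup_{|z| ≤ R} |f(z + λ_n·b) − g(z)| < ε. -/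
lemma nested_avoid (S : ℕ → Set ℝ) (l d : ℕ → ℝ)
    (hd : ∀ k, 0 < d k) (hl : ∀ k, 0 < l k)
    (hsh : ∀ k, l (k + 1) + 2 * d k ≤ l k / 2)
    (hdi : ∀ k, ∀ t ∈ S k, ∀ t' ∈ S k, |t - t'| ≤ l k → |t - t'| < d k) :
    ∃ x : ℝ, 0 ≤ x ∧ x ≤ l 0 ∧ ∀ k, x ∉ S k := by
  classical
  have hmono : ∀ k, l (k + 1) ≤ l k := by
    intro k
    have := hsh k; have := hd k; have := hl k; linarith
  set next : ℕ → ℝ → ℝ := fun k p =>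
    if h : ∃ t₀, t₀ ∈ S k ∧ p ≤ t₀ ∧ t₀ ≤ p + l k then
      if h.choose ≤ p + l k / 2 then p + l k - l (k + 1) else p
    else p with hnext
  set P : ℕ → ℝ := fun n => Nat.rec 0 next n with hP
  have hPs : ∀ k, P (k + 1) = next k (P k) := fun _ => rfl
  have hstep : ∀ k, P k ≤ P (k + 1) ∧ P (k + 1) + l (k + 1) ≤ P k + l k ∧
      ∀ t, P (k + 1) ≤ t → t ≤ P (k + 1) + l (k + 1) → t ∉ S k := by
    intro k
    rw [hPs k]
    simp only [hnext]
    set p := P k with hp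
    by_cases h : ∃ t₀, t₀ ∈ S k ∧ p ≤ t₀ ∧ t₀ ≤ p + l k
    · obtain ⟨ht₀S, ht₀1, ht₀2⟩ := h.choose_spec
      by_cases h2 : h.choose ≤ p + l k / 2
      · rw [dif_pos h, if_pos h2]
        refine ⟨by have := hmono k; linarith, by linarith, ?_⟩
        intro t ht1 ht2 htS
        have habs : |t - h.choose| ≤ l k := by
          rw [abs_le]
          constructor <;> · have := hmono k; linarith
        have hlt := hdi k t htS h.choose ht₀S habs
        have h2d : t - h.choose ≥ 2 * d k := by have := hsh k; linarith
        have := le_abs_self (t - h.choose)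
        have := hd k
        linarith
      · rw [dif_pos h, if_neg h2]
        push_neg at h2
        refine ⟨le_refl _, by have := hmono k; linarith, ?_⟩
        intro t ht1 ht2 htS
        have habs : |t - h.choose| ≤ l k := by
          rw [abs_le]
          constructor <;> · have := hmono k; linarith
        have hlt := hdi k t htS h.choose ht₀S habs
        have h2d : h.choose - t ≥ 2 * d k := by have := hsh k; linarith
        have : h.choose - t ≤ |t - h.choose| := by
          rw [abs_sub_comm]; exact le_abs_self _
        have := hd k
        linarith
    · rw [dif_neg h]
      push_neg at h
      refine ⟨le_refl _, by have := hmono k; linarith, ?_⟩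
      intro t ht1 ht2 htS
      have := h t htS ht1
      have := hmono k
      linarith
  have hPmono : Monotone P := monotone_nat_of_le_succ fun k => (hstep k).1
  have hchain : ∀ k j, k ≤ j → P j + l j ≤ P k + l k := by
    intro k j hkj
    induction j, hkj using Nat.le_induction with
    | base => exact le_refl _
    | succ n hn ih => exact le_trans (hstep n).2.1 ih
  have hbdd : BddAbove (Set.range P) := by
    refine ⟨P 0 + l 0, ?_⟩
    rintro x ⟨j, rfl⟩
    have := hchain 0 j (Nat.zero_le j)
    have := hl j
    linarith
  set x := ⨆ k, P k with hx
  have hx1 : ∀ k, P k ≤ x := fun k => le_ciSup hbdd k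
  have hx2 : ∀ k, x ≤ P k + l k := by
    intro k
    refine ciSup_le fun j => ?_
    rcases le_total j k with hjk | hkj
    · have := hPmono hjk; have := hl k; linarith
    · have := hchain k j hkj; have := hl j; linarith
  have hP0 : P 0 = 0 := rfl
  refine ⟨x, ?_, ?_, ?_⟩
  · have := hx1 0; rw [hP0] at this; exact this
  · have := hx2 0; rw [hP0] at this; linarith
  · intro k
    exact (hstep k).2.2 x (hx1 (k + 1)) (hx2 (k + 1))

set_option maxHeartbeats 1000000 in
/-- Non-existence of common hypercyclic entire functions for translations along a
non-degenerate line segment, when `liminf |λ_{n+1}|/|λ_n| > 2`. -/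
theorem no_common_hypercyclic_on_segment
    (lam : ℕ → ℂ) (hlam : ∀ n, lam n ≠ 0)
    (hliminf : (2 : EReal) <
      Filter.liminf (fun n => ((‖lam (n + 1)‖ / ‖lam n‖ : ℝ) : EReal)) Filter.atTop)
    (u v : ℂ) (huv : u ≠ v) (h0 : (0 : ℂ) ∉ segment ℝ u v) :
    ¬ ∃ f : ℂ → ℂ, Differentiable ℂ f ∧
      ∀ b ∈ segment ℝ u v, ∀ g : ℂ → ℂ, Differentiable ℂ g →
        ∀ R > (0 : ℝ), ∀ ε > (0 : ℝ), ∃ n : ℕ,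
          ∀ z : ℂ, ‖z‖ ≤ R → ‖f (z + lam n * b) - g z‖ < ε := by
  rintro ⟨f, hfd, hcyc⟩
  have hlamp : ∀ n, 0 < ‖lam n‖ := fun n => norm_pos_iff.mpr (hlam n)
  set L : ℝ := ‖v - u‖ with hLdef
  have hL : 0 < L := norm_pos_iff.mpr (sub_ne_zero.mpr (Ne.symm huv))
  set M : ℝ := max ‖u‖ ‖v‖ with hMdef
  have hM0 : 0 ≤ M := le_trans (norm_nonneg u) (le_max_left _ _)
  -- extract a real ratio bound r > 2 valid from some index N₀ on
  obtain ⟨r, hr2, hrlt⟩ := EReal.exists_between_coe_real hliminf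
  have hr2' : (2 : ℝ) < r := by
    have h2e : ((2 : ℝ) : EReal) = (2 : EReal) := by norm_cast
    rw [← h2e] at hr2
    exact_mod_cast hr2
  have hr0 : (0 : ℝ) < r := by linarith
  have hev : ∀ᶠ n in Filter.atTop,
      (r : EReal) < ((‖lam (n + 1)‖ / ‖lam n‖ : ℝ) : EReal) :=
    Filter.eventually_lt_of_lt_liminf hrlt
  obtain ⟨N₀, hN₀⟩ := Filter.eventually_atTop.mp hev
  have hstep : ∀ n, N₀ ≤ n → r * ‖lam n‖ ≤ ‖lam (n + 1)‖ := by
    intro n hn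
    have h1 : r < ‖lam (n + 1)‖ / ‖lam n‖ := by exact_mod_cast hN₀ n hn
    have := (lt_div_iff₀ (hlamp n)).mp h1
    linarith
  have hmono2 : ∀ m n, N₀ ≤ m → m ≤ n → ‖lam m‖ ≤ ‖lam n‖ := by
    intro m n hm hmn
    induction n, hmn using Nat.le_induction with
    | base => exact le_refl _
    | succ n hn ih =>
        have h1 := hstep n (le_trans hm hn)
        have h2 := hlamp n
        nlinarith
  -- bound for the initial terms
  have hC : ∀ N : ℕ, ∃ C : ℝ, ∀ m, m < N → ‖lam m‖ ≤ C := by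
    intro N
    induction N with
    | zero => exact ⟨0, fun m hm => absurd hm (Nat.not_lt_zero m)⟩
    | succ N ih =>
        obtain ⟨C, hC⟩ := ih
        refine ⟨max C ‖lam N‖, fun m hm => ?_⟩
        rcases Nat.lt_succ_iff_lt_or_eq.mp hm with h | h
        · exact le_trans (hC m h) (le_max_left _ _)
        · rw [h]; exact le_max_right _ _
  obtain ⟨C, hCb⟩ := hC N₀
  -- growth of the tail
  have hgrow : ∀ k, r ^ k * ‖lam N₀‖ ≤ ‖lam (N₀ + k)‖ := by
    intro k
    induction k with
    | zero => simp
    | succ k ih =>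
        have h1 := hstep (N₀ + k) (Nat.le_add_right _ _)
        calc r ^ (k + 1) * ‖lam N₀‖ = r * (r ^ k * ‖lam N₀‖) := by ring
          _ ≤ r * ‖lam (N₀ + k)‖ := by nlinarith [pow_pos hr0 k, hlamp N₀]
          _ ≤ ‖lam (N₀ + k + 1)‖ := h1
  -- choose N₂
  obtain ⟨k₀, hk₀⟩ := pow_unbounded_of_one_lt (max (1 / L) C / ‖lam N₀‖) (by linarith : (1:ℝ) < r)
  set N₂ : ℕ := N₀ + k₀ with hN₂def
  have hN₂big : max (1 / L) C ≤ ‖lam N₂‖ := by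
    have h1 := hgrow k₀
    have h2 : max (1 / L) C < r ^ k₀ * ‖lam N₀‖ := by
      have := (div_lt_iff₀ (hlamp N₀)).mp hk₀
      linarith
    linarith
  have hN₂all : ∀ m, m ≤ N₂ → ‖lam m‖ ≤ ‖lam N₂‖ := by
    intro m hm
    rcases lt_or_ge m N₀ with h | h
    · exact le_trans (le_trans (hCb m h) (le_max_right _ _)) hN₂big
    · exact hmono2 m N₂ h hm
  -- epsilon
  set ε : ℝ := (1 - 2 / r) / 9 with hεdef
  have h2r1 : 2 / r < 1 := (div_lt_one hr0).mpr hr2'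
  have h2r0 : 0 < 2 / r := by positivity
  have hε : 0 < ε := by rw [hεdef]; linarith
  have hε1 : ε < 1 := by rw [hεdef]; linarith
  have hkey : 1 / r ≤ 1 / 2 - 4 * ε := by
    rw [hεdef]
    rw [div_le_iff₀ hr0] at *
    have : 2 = (2 / r) * r := by field_simp
    nlinarith [h2r1, hr0]
  -- bound on compact ball
  obtain ⟨B, hB⟩ := (isCompact_closedBall (0 : ℂ) (‖lam N₂‖ * M)).exists_bound_of_continuousOn
    hfd.continuous.continuousOn
  set a : ℂ := ((max B 0 + 2 : ℝ) : ℂ) with hadef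
  have hanorm : ‖a‖ = max B 0 + 2 := by
    rw [hadef, Complex.norm_real, Real.norm_eq_abs, abs_of_nonneg]
    have : (0:ℝ) ≤ max B 0 := le_max_right _ _
    linarith
  -- segment parameterization
  set b : ℝ → ℂ := fun t => ((1 - t : ℝ) : ℂ) * u + ((t : ℝ) : ℂ) * v with hbdef
  have hbseg : ∀ t, t ∈ Set.Icc (0:ℝ) 1 → b t ∈ segment ℝ u v := by
    intro t ht
    exact ⟨1 - t, t, by linarith [ht.2], ht.1, by ring,
      by rw [Complex.real_smul, Complex.real_smul]⟩
  have hbM : ∀ t, t ∈ Set.Icc (0:ℝ) 1 → ‖b t‖ ≤ M := by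
    intro t ht
    calc ‖b t‖ ≤ ‖((1 - t : ℝ) : ℂ) * u‖ + ‖((t : ℝ) : ℂ) * v‖ := norm_add_le _ _
      _ = |1 - t| * ‖u‖ + |t| * ‖v‖ := by
          rw [norm_mul, norm_mul, Complex.norm_real, Complex.norm_real,
            Real.norm_eq_abs, Real.norm_eq_abs]
      _ = (1 - t) * ‖u‖ + t * ‖v‖ := by
          rw [abs_of_nonneg (by linarith [ht.2]), abs_of_nonneg ht.1]
      _ ≤ (1 - t) * M + t * M := by
          have h1 : ‖u‖ ≤ M := le_max_left _ _
          have h2 : ‖v‖ ≤ M := le_max_right _ _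
          have := ht.1; have := ht.2
          nlinarith
      _ = M := by ring
  have hbdiff : ∀ t t' : ℝ, b t - b t' = ((t - t' : ℝ) : ℂ) * (v - u) := by
    intro t t'
    rw [hbdef]
    push_cast
    ring
  have hbnorm : ∀ t t' : ℝ, ‖b t - b t'‖ = |t - t'| * L := by
    intro t t'
    rw [hbdiff, norm_mul, Complex.norm_real, Real.norm_eq_abs, hLdef]
  -- the sets S n
  set S : ℕ → Set ℝ := fun n => {t | t ∈ Set.Icc (0:ℝ) 1 ∧
    ∀ z : ℂ, ‖z‖ ≤ 1 → ‖f (z + lam n * b t) - (z + a)‖ < ε} with hSdef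
  -- low levels are empty
  have hSempty : ∀ m, m ≤ N₂ → ∀ t, t ∉ S m := by
    intro m hm t ht
    obtain ⟨htI, htA⟩ := ht
    have h1 := htA 0 (by norm_num)
    rw [zero_add, zero_add] at h1
    have h2 : ‖lam m * b t‖ ≤ ‖lam N₂‖ * M := by
      rw [norm_mul]
      have := hN₂all m hm
      have := hbM t htI
      have := hlamp m
      nlinarith [norm_nonneg (b t)]
    have h3 : ‖f (lam m * b t)‖ ≤ B :=
      hB _ (Metric.mem_closedBall.mpr (by simpa using h2))
    have h4 : ‖a‖ - ‖f (lam m * b t)‖ ≤ ‖f (lam m * b t) - a‖ := by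
      rw [norm_sub_rev]
      exact norm_sub_norm_le _ _
    have h5 : B ≤ max B 0 := le_max_left _ _
    rw [hanorm] at h4
    linarith
  -- the dichotomy / cluster lemma
  have hdich : ∀ n, ∀ t ∈ S n, ∀ t' ∈ S n,
      ‖lam n‖ * (|t - t'| * L) ≤ 1 → ‖lam n‖ * (|t - t'| * L) < 2 * ε := by
    intro n t ht t' ht' hle
    set c : ℂ := lam n * b t with hcdef
    set c' : ℂ := lam n * b t' with hc'def
    have hcc' : ‖c - c'‖ = ‖lam n‖ * (|t - t'| * L) := by
      rw [hcdef, hc'def, ← mul_sub, norm_mul, hbnorm]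
    set z : ℂ := (c' - c) / 2 with hzdef
    set z' : ℂ := (c - c') / 2 with hz'def
    have hznorm : ‖z‖ ≤ 1 := by
      rw [hzdef, norm_div]
      rw [norm_sub_rev] at hcc'
      simp only [Complex.norm_ofNat]
      linarith [hcc' ▸ hle]
    have hz'norm : ‖z'‖ ≤ 1 := by
      rw [hz'def, norm_div]
      simp only [Complex.norm_ofNat]
      linarith [hcc' ▸ hle]
    have h1 := ht.2 z hznorm
    have h2 := ht'.2 z' hz'norm
    have hw : z + c = z' + c' := by rw [hzdef, hz'def]; ring
    rw [hw] at h1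
    have hkeyeq : c' - c = (f (z' + c') - (z' + a)) - (f (z' + c') - (z + a)) := by
      rw [hzdef, hz'def]; ring
    have h3 : ‖c' - c‖ < 2 * ε := by
      rw [hkeyeq]
      calc ‖(f (z' + c') - (z' + a)) - (f (z' + c') - (z + a))‖
          ≤ ‖f (z' + c') - (z' + a)‖ + ‖f (z' + c') - (z + a)‖ := norm_sub_le _ _
        _ < 2 * ε := by linarith
    rw [norm_sub_rev] at h3
    rw [hcc'] at h3
    exact h3
  -- apply the nested interval lemma
  set l : ℕ → ℝ := fun k => 1 / (‖lam (N₂ + k + 1)‖ * L) with hldef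
  set d : ℕ → ℝ := fun k => 2 * ε / (‖lam (N₂ + k + 1)‖ * L) with hddef
  have hGpos : ∀ k, 0 < ‖lam (N₂ + k + 1)‖ * L := fun k => mul_pos (hlamp _) hL
  have hdpos : ∀ k, 0 < d k := fun k => div_pos (by linarith) (hGpos k)
  have hlpos : ∀ k, 0 < l k := fun k => div_pos one_pos (hGpos k)
  have hsh : ∀ k, l (k + 1) + 2 * d k ≤ l k / 2 := by
    intro k
    have hG1 : (0:ℝ) < ‖lam (N₂ + k + 1)‖ * L := hGpos k
    have hG : r * (‖lam (N₂ + k + 1)‖ * L) ≤ ‖lam (N₂ + (k + 1) + 1)‖ * L := by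
      have h := hstep (N₂ + k + 1) (by omega)
      have he : N₂ + (k + 1) + 1 = (N₂ + k + 1) + 1 := by omega
      rw [he]
      nlinarith
    have h1 : l (k + 1) ≤ 1 / r * (1 / (‖lam (N₂ + k + 1)‖ * L)) :=
      calc l (k + 1) = 1 / (‖lam (N₂ + (k + 1) + 1)‖ * L) := rfl
        _ ≤ 1 / (r * (‖lam (N₂ + k + 1)‖ * L)) :=
            one_div_le_one_div_of_le (mul_pos hr0 hG1) hG
        _ = 1 / r * (1 / (‖lam (N₂ + k + 1)‖ * L)) := (one_div_mul_one_div r _).symm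
    have h3 : (1 / r) * (1 / (‖lam (N₂ + k + 1)‖ * L)) ≤
        (1 / 2 - 4 * ε) * (1 / (‖lam (N₂ + k + 1)‖ * L)) :=
      mul_le_mul_of_nonneg_right hkey (by positivity)
    have h4 : d k = 2 * ε * (1 / (‖lam (N₂ + k + 1)‖ * L)) := by
      show 2 * ε / (‖lam (N₂ + k + 1)‖ * L) = _
      field_simp
    have h5 : l k = 1 / (‖lam (N₂ + k + 1)‖ * L) := rfl
    have h6 : (1 / 2 - 4 * ε) * (1 / (‖lam (N₂ + k + 1)‖ * L)) +
        2 * (2 * ε * (1 / (‖lam (N₂ + k + 1)‖ * L))) =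
        (1 / (‖lam (N₂ + k + 1)‖ * L)) / 2 := by ring
    rw [h4, h5]
    linarith
  have hdi : ∀ k, ∀ t ∈ S (N₂ + k + 1), ∀ t' ∈ S (N₂ + k + 1),
      |t - t'| ≤ l k → |t - t'| < d k := by
    intro k t ht t' ht' hle
    have hG := hGpos k
    have hlk : l k = 1 / (‖lam (N₂ + k + 1)‖ * L) := rfl
    have hdk : d k = 2 * ε / (‖lam (N₂ + k + 1)‖ * L) := rfl
    rw [hlk] at hle
    have he : ‖lam (N₂ + k + 1)‖ * (|t - t'| * L) =
        |t - t'| * (‖lam (N₂ + k + 1)‖ * L) := by ring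
    have hle2 : |t - t'| * (‖lam (N₂ + k + 1)‖ * L) ≤ 1 := (le_div_iff₀ hG).mp hle
    have hle' : ‖lam (N₂ + k + 1)‖ * (|t - t'| * L) ≤ 1 := by rw [he]; exact hle2
    have hfin := hdich (N₂ + k + 1) t ht t' ht' hle'
    rw [he] at hfin
    rw [hdk, lt_div_iff₀ hG]
    exact hfin
  obtain ⟨x, hx0, hxl, hxS⟩ := nested_avoid (fun k => S (N₂ + k + 1)) l d hdpos hlpos hsh hdi
  have hl0le1 : l 0 ≤ 1 := by
    rw [hldef]
    rw [div_le_one (hGpos 0)]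
    have h1 : 1 / L ≤ ‖lam N₂‖ := le_trans (le_max_left _ _) hN₂big
    have h2 : ‖lam N₂‖ ≤ ‖lam (N₂ + 0 + 1)‖ := hmono2 N₂ (N₂ + 0 + 1) (by omega) (by omega)
    have := (div_le_iff₀ hL).mp (le_trans h1 h2)
    linarith
  have hxI : x ∈ Set.Icc (0:ℝ) 1 := ⟨hx0, le_trans hxl hl0le1⟩
  -- final contradiction
  obtain ⟨n, hn⟩ := hcyc (b x) (hbseg x hxI) (fun z => z + a)
    (differentiable_id.add_const a) 1 one_pos ε hε
  have hxSn : x ∈ S n := ⟨hxI, hn⟩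
  rcases le_or_gt n N₂ with h | h
  · exact hSempty n h x hxSn
  · have heq : N₂ + (n - N₂ - 1) + 1 = n := by omega
    exact hxS (n - N₂ - 1) (by rw [heq]; exact hxSn)
end

section
/- Let (λ_n)_{n∈ℕ} be a sequence of non-zero complex numbers such that liminf_{n→∞} |λ_{n+1}|/|λ_n| > 2. Then there is no entire function f : ℂ → ℂ such that for every b ∈ ℂ \ {0} the set {z ↦ f(z + λ_n·b) : n ∈ ℕ} is dense in the space of entire functions with the topology of locally uniform convergence; equivalently, there is no entire f such that for every non-zero b, every entire g : ℂ → ℂ, every R > 0 and every ε > 0 there exists n with sup_{|z| ≤ R} |f(z + λ_n·b) − g(z)| < ε. -/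
set_option maxHeartbeats 1000000

open Filter Set

/-- Core combinatorial lemma: finitely many "grid-like" subsets of `ℝ` associated to
indices whose scales `a n` grow with ratio `q > 2` cannot cover a sufficiently long
interval.  We process the (sorted) indices one by one, keeping a nested closed interval
disjoint from all the sets handled so far. -/
private lemma rec_avoid
    (a : ℕ → ℝ) (q G ε : ℝ) (N₀ : ℕ) (B : ℕ → Set ℝ)
    (ha : ∀ n, 0 < a n)
    (hq : 2 < q) (hG : 0 < G) (hε : 0 < ε)
    (hqε : 4 * q * ε ≤ (q - 2) * G)
    (hbig : ∀ n m, N₀ ≤ n → n < m → q * a n ≤ a m)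
    (hP : ∀ n, ∀ x ∈ B n, ∀ y ∈ B n, a n * |x - y| ≤ q * G → a n * |x - y| < 2 * ε) :
    ∀ L : List ℕ, L.Chain' (· < ·) → (∀ n ∈ L, N₀ ≤ n) →
      ∀ u v : ℝ, u ≤ v → (∀ n ∈ L.head?, G ≤ a n * (v - u)) →
      ∃ x, x ∈ Set.Icc u v ∧ ∀ n ∈ L, x ∉ B n := by
  intro L
  induction L with
  | nil =>
    intro _ _ u v huv _
    exact ⟨u, ⟨le_refl u, huv⟩, by simp⟩
  | cons n L' ih =>
    intro hchain hmemN u v huv hhead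
    have hq0 : (0:ℝ) < q := by linarith
    have han : (0:ℝ) < a n := ha n
    have hNn : N₀ ≤ n := hmemN n (List.mem_cons_self)
    obtain ⟨hchainhead, hchain'⟩ := List.isChain_cons.mp hchain
    have hmemN' : ∀ k ∈ L', N₀ ≤ k := fun k hk => hmemN k (List.mem_cons_of_mem n hk)
    have hhn : G ≤ a n * (v - u) := hhead n (by simp)
    have h4εG : 4 * ε ≤ G := by nlinarith
    -- working window of length `m`
    obtain ⟨m, hm_le, hm_qG, hm_G⟩ :
        ∃ m : ℝ, m ≤ v - u ∧ a n * m ≤ q * G ∧ G ≤ a n * m := by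
      refine ⟨min (v - u) (q * G / a n), min_le_left _ _, ?_, ?_⟩
      · calc a n * min (v - u) (q * G / a n) ≤ a n * (q * G / a n) :=
              mul_le_mul_of_nonneg_left (min_le_right _ _) han.le
          _ = q * G := by field_simp
      · rcases le_total (v - u) (q * G / a n) with h | h
        · rw [min_eq_left h]; exact hhn
        · rw [min_eq_right h, show a n * (q * G / a n) = q * G by field_simp]
          nlinarith
    have hm0 : 0 < m := by nlinarith
    -- the cluster diameter `D`
    obtain ⟨D, haD, hD0⟩ : ∃ D : ℝ, a n * D = 2 * ε ∧ 0 < D :=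
      ⟨2 * ε / a n, by field_simp, div_pos (by linarith) han⟩
    have h2Dm : 2 * D ≤ m := by
      have h1 : a n * (2 * D) ≤ a n * m := by
        have : a n * (2 * D) = 2 * (a n * D) := by ring
        rw [this, haD]; linarith
      exact (mul_le_mul_iff_right₀ han).mp h1
    -- all points of `B n` inside the window are within `D` of each other
    have hclust : ∀ x ∈ B n, x ∈ Set.Icc u (u + m) → ∀ p ∈ B n, p ∈ Set.Icc u (u + m) →
        |x - p| < D := by
      intro x hx hxI p hp hpI
      have hx1 := hxI.1; have hx2 := hxI.2; have hp1 := hpI.1; have hp2 := hpI.2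
      have h1 : |x - p| ≤ m := by
        rw [abs_sub_le_iff]; constructor <;> linarith
      have h2 : a n * |x - p| ≤ q * G :=
        le_trans (mul_le_mul_of_nonneg_left h1 han.le) hm_qG
      have h3 := hP n x hx p hp h2
      rw [← haD] at h3
      exact lt_of_mul_lt_mul_left h3 han.le
    by_cases hex : ∃ p, p ∈ B n ∧ p ∈ Set.Icc u (u + m)
    · obtain ⟨p, hpB, hpI⟩ := hex
      have hp1 := hpI.1
      have hp2 : p ≤ u + m := hpI.2
      -- length requirement for the next index in the list
      have hnext : ∀ mm ∈ L'.head?, G ≤ a mm * ((m - 2*D)/2) := by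
        intro mm hmm
        have hlt : n < mm := hchainhead mm hmm
        have hqa : q * a n ≤ a mm := hbig n mm hNn hlt
        have h5 : G - 4*ε ≤ a n * (m - 2*D) := by
          have : a n * (m - 2*D) = a n * m - 2 * (a n * D) := by ring
          rw [this, haD]; linarith
        have h6 : 2 * G ≤ q * (G - 4*ε) := by nlinarith
        have h7 : 0 ≤ m - 2*D := by linarith
        have h8 : q * (G - 4*ε) ≤ q * (a n * (m - 2*D)) :=
          mul_le_mul_of_nonneg_left h5 hq0.le
        have h9 : (q * a n) * (m - 2*D) ≤ a mm * (m - 2*D) :=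
          mul_le_mul_of_nonneg_right hqa h7
        have h10 : a mm * ((m - 2*D)/2) = (a mm * (m - 2*D))/2 := by ring
        have h11 : q * (a n * (m - 2*D)) = (q * a n) * (m - 2*D) := by ring
        linarith
      by_cases hside : (m - 2*D)/2 ≤ (p - D) - u
      · -- keep the left piece `[u, p - D]`
        have huv' : u ≤ p - D := by linarith
        obtain ⟨x, hxI, hxB⟩ := ih hchain' hmemN' u (p - D) huv' (by
          intro mm hmm
          have h12 := hnext mm hmm
          have h13 : a mm * ((m - 2*D)/2) ≤ a mm * ((p - D) - u) :=
            mul_le_mul_of_nonneg_left hside (ha mm).le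
          linarith)
        have hxIu : x ∈ Set.Icc u (u + m) :=
          ⟨hxI.1, le_trans hxI.2 (by linarith)⟩
        refine ⟨x, ⟨hxI.1, le_trans hxI.2 (by linarith)⟩, ?_⟩
        intro k hk
        rcases List.mem_cons.mp hk with rfl | hk'
        · intro hxBn
          have hc := hclust x hxBn hxIu p hpB hpI
          have hc2 : D ≤ |x - p| := by
            rw [abs_sub_comm]
            calc D ≤ p - x := by linarith [hxI.2]
              _ ≤ |p - x| := le_abs_self _
          linarith
        · exact hxB k hk'
      · -- keep the right piece `[p + D, u + m]`
        push_neg at hside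
        have hlen : (m - 2*D)/2 ≤ (u + m) - (p + D) := by linarith
        have huv' : p + D ≤ u + m := by linarith
        obtain ⟨x, hxI, hxB⟩ := ih hchain' hmemN' (p + D) (u + m) huv' (by
          intro mm hmm
          have h12 := hnext mm hmm
          have h13 : a mm * ((m - 2*D)/2) ≤ a mm * ((u + m) - (p + D)) :=
            mul_le_mul_of_nonneg_left hlen (ha mm).le
          linarith)
        have hxIu : x ∈ Set.Icc u (u + m) := ⟨by linarith [hxI.1], hxI.2⟩
        refine ⟨x, ⟨by linarith [hxI.1], le_trans hxI.2 (by linarith)⟩, ?_⟩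
        intro k hk
        rcases List.mem_cons.mp hk with rfl | hk'
        · intro hxBn
          have hc := hclust x hxBn hxIu p hpB hpI
          have hc2 : D ≤ |x - p| := by
            calc D ≤ x - p := by linarith [hxI.1]
              _ ≤ |x - p| := le_abs_self _
          linarith
        · exact hxB k hk'
    · -- `B n` misses the whole window: just shrink to the window
      push_neg at hex
      have huv₁ : u ≤ u + m := by linarith
      obtain ⟨x, hxI, hxB⟩ := ih hchain' hmemN' u (u + m) huv₁ (by
        intro mm hmm
        have hlt : n < mm := hchainhead mm hmm
        have hqa : q * a n ≤ a mm := hbig n mm hNn hlt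
        have hanm : a n ≤ a mm := by nlinarith
        have h14 : a n * m ≤ a mm * m := mul_le_mul_of_nonneg_right hanm hm0.le
        have h15 : (u + m) - u = m := by ring
        rw [h15]; linarith)
      refine ⟨x, ⟨hxI.1, le_trans hxI.2 (by linarith)⟩, ?_⟩
      intro k hk
      rcases List.mem_cons.mp hk with rfl | hk'
      · exact fun hxBn => hex x hxBn hxI
      · exact hxB k hk'
/-- Non-existence of a common hypercyclic entire function for the families of
translations `(T_{λ_n b})`, `b ≠ 0`, when `liminf |λ_{n+1}|/|λ_n| > 2`. -/
theorem no_common_hypercyclic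
    (lam : ℕ → ℂ) (hlam : ∀ n, lam n ≠ 0)
    (hliminf : (2 : EReal) <
      Filter.liminf (fun n => ((‖lam (n + 1)‖ / ‖lam n‖ : ℝ) : EReal)) Filter.atTop) :
    ¬ ∃ f : ℂ → ℂ, Differentiable ℂ f ∧
      ∀ b : ℂ, b ≠ 0 → ∀ g : ℂ → ℂ, Differentiable ℂ g →
        ∀ R > (0 : ℝ), ∀ ε > (0 : ℝ), ∃ n : ℕ,
          ∀ z : ℂ, ‖z‖ ≤ R → ‖f (z + lam n * b) - g z‖ < ε := by
  rintro ⟨f, hf, H⟩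
  set a : ℕ → ℝ := fun n => ‖lam n‖ with ha_def
  have ha : ∀ n, 0 < a n := fun n => norm_pos_iff.mpr (hlam n)
  -- extract a real ratio bound `q > 2` valid from some index `N₀` on
  obtain ⟨c, h2c, hc⟩ := exists_between hliminf
  have hcT : c ≠ ⊤ := (lt_of_lt_of_le hc le_top).ne
  have hcB : c ≠ ⊥ := (lt_of_le_of_lt bot_le h2c).ne'
  set q : ℝ := c.toReal with hq_def
  have hqc : (q : EReal) = c := EReal.coe_toReal hcT hcB
  have h2q : (2:ℝ) < q := by
    have : ((2:ℝ) : EReal) < (q : EReal) := by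
      rw [hqc]; exact_mod_cast h2c
    exact_mod_cast this
  have hq0 : (0:ℝ) < q := by linarith
  have hev : ∀ᶠ n in atTop, (q : EReal) < ((‖lam (n + 1)‖ / ‖lam n‖ : ℝ) : EReal) :=
    eventually_lt_of_lt_liminf (hqc ▸ hc)
  obtain ⟨N₀, hN₀⟩ := eventually_atTop.mp hev
  have hstep : ∀ n, N₀ ≤ n → q * a n < a (n + 1) := by
    intro n hn
    have h1 := hN₀ n hn
    rw [EReal.coe_lt_coe_iff] at h1
    exact (lt_div_iff₀ (ha n)).mp h1
  have hmono1 : ∀ m, N₀ ≤ m → a m ≤ a (m + 1) := by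
    intro m hm
    have h1 : a m ≤ q * a m := by nlinarith [ha m]
    exact h1.trans (hstep m hm).le
  have hmono : ∀ n m, N₀ ≤ n → n ≤ m → a n ≤ a m := by
    intro n m hn hnm
    induction m, hnm using Nat.le_induction with
    | base => exact le_refl _
    | succ m hm ih => exact ih.trans (hmono1 m (hn.trans hm))
  have hbig : ∀ n m, N₀ ≤ n → n < m → q * a n ≤ a m := by
    intro n m hn hnm
    exact (hstep n hn).le.trans (hmono (n + 1) m (by omega) hnm)
  set G : ℝ := a N₀ with hG_def
  have hG : 0 < G := ha N₀
  have hGa : ∀ n, N₀ ≤ n → G ≤ a n := fun n hn => hmono N₀ n le_rfl hn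
  set R : ℝ := q * G / 2 with hR_def
  have hR : 0 < R := by rw [hR_def]; positivity
  set ε : ℝ := (q - 2) * G / (8 * q) with hε_def
  have hε : 0 < ε := by
    rw [hε_def]
    have : 0 < q - 2 := by linarith
    positivity
  have hqε : 4 * q * ε ≤ (q - 2) * G := by
    rw [hε_def]
    rw [show 4 * q * ((q - 2) * G / (8 * q)) = (q - 2) * G / 2 by field_simp; ring]
    nlinarith
  -- bound for `f` near the origin, to kill small indices
  have hNe : (Finset.range (N₀ + 1)).Nonempty := ⟨N₀, Finset.self_mem_range_succ N₀⟩
  set Amax : ℝ := (Finset.range (N₀ + 1)).sup' hNe a with hAmax_def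
  have hAmax : ∀ k, k ≤ N₀ → a k ≤ Amax := by
    intro k hk
    exact Finset.le_sup' a (Finset.mem_range_succ_iff.mpr hk)
  have hAmax0 : 0 < Amax := lt_of_lt_of_le (ha N₀) (hAmax N₀ le_rfl)
  obtain ⟨S, hS⟩ := (isCompact_closedBall (0:ℂ) (2 * Amax)).exists_bound_of_continuousOn
    hf.continuous.continuousOn
  have hS0 : 0 ≤ S := by
    refine le_trans (norm_nonneg (f 0)) (hS 0 ?_)
    rw [Metric.mem_closedBall, dist_self]
    positivity
  set C : ℝ := S + ε + 1 with hC_def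
  have hC0 : 0 < C := by rw [hC_def]; linarith
  -- the serving sets
  set B : ℕ → Set ℝ :=
    fun n => {x : ℝ | ∀ z : ℂ, ‖z‖ ≤ R → ‖f (z + lam n * (x:ℂ)) - (z + (C:ℂ))‖ < ε}
    with hB_def
  -- the grid property
  have hP : ∀ n, ∀ x ∈ B n, ∀ y ∈ B n, a n * |x - y| ≤ q * G → a n * |x - y| < 2 * ε := by
    intro n x hx y hy hle
    set t : ℂ := lam n * ((y:ℂ) - (x:ℂ)) with ht_def
    have ht : ‖t‖ = a n * |y - x| := by
      rw [ht_def, norm_mul]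
      congr 1
      rw [show ((y:ℂ) - (x:ℂ)) = ((y - x : ℝ) : ℂ) by push_cast; ring]
      rw [Complex.norm_real, Real.norm_eq_abs]
    have habs : |x - y| = |y - x| := abs_sub_comm x y
    have htqG : ‖t‖ ≤ q * G := by rw [ht, ← habs]; exact hle
    have htR : ‖t / 2‖ ≤ R := by
      rw [norm_div, Complex.norm_ofNat, hR_def]
      linarith
    have h1 := hx (t / 2) htR
    have h2R : ‖-(t / 2)‖ ≤ R := by rwa [norm_neg]
    have h2 := hy (-(t / 2)) h2R
    have hpt : -(t / 2) + lam n * (y:ℂ) = t / 2 + lam n * (x:ℂ) := by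
      rw [ht_def]; ring
    rw [hpt] at h2
    have hkey : ‖t‖ < 2 * ε := by
      calc ‖t‖ = ‖((t/2 + (C:ℂ)) - f (t/2 + lam n * (x:ℂ)))
            + (f (t/2 + lam n * (x:ℂ)) - (-(t/2) + (C:ℂ)))‖ := by congr 1; ring
        _ ≤ ‖(t/2 + (C:ℂ)) - f (t/2 + lam n * (x:ℂ))‖
            + ‖f (t/2 + lam n * (x:ℂ)) - (-(t/2) + (C:ℂ))‖ := norm_add_le _ _
        _ < ε + ε := by
            refine add_lt_add ?_ h2
            rw [norm_sub_rev]; exact h1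
        _ = 2 * ε := by ring
    calc a n * |x - y| = a n * |y - x| := by rw [habs]
      _ = ‖t‖ := ht.symm
      _ < 2 * ε := hkey
  -- small indices cannot serve anything in `[1,2]`
  have hkill : ∀ k, k < N₀ → ∀ x : ℝ, x ∈ Set.Icc (1:ℝ) 2 → x ∉ B k := by
    intro k hk x hx hxB
    have h0 := hxB 0 (by rw [norm_zero]; exact hR.le)
    simp only [zero_add] at h0
    have hwball : (lam k * (x:ℂ)) ∈ Metric.closedBall (0:ℂ) (2 * Amax) := by
      rw [mem_closedBall_zero_iff, norm_mul, Complex.norm_real, Real.norm_eq_abs]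
      have h1 : a k ≤ Amax := hAmax k hk.le
      have h2 : |x| ≤ 2 := abs_le.mpr ⟨by linarith [hx.1], hx.2⟩
      nlinarith [ha k, abs_nonneg x]
    have hfw := hS _ hwball
    have hlower : C - S ≤ ‖f (lam k * (x:ℂ)) - (C:ℂ)‖ := by
      have hn1 : ‖((C:ℝ):ℂ)‖ = C := by
        rw [Complex.norm_real, Real.norm_eq_abs, abs_of_pos hC0]
      have hn2 : ‖((C:ℝ):ℂ)‖ - ‖f (lam k * (x:ℂ))‖ ≤ ‖f (lam k * (x:ℂ)) - (C:ℂ)‖ := by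
        rw [norm_sub_rev]
        exact norm_sub_norm_le _ _
      rw [hn1] at hn2
      linarith
    rw [hC_def] at hlower
    linarith
  -- the covering
  have hcov : Set.Icc (1:ℝ) 2 ⊆ ⋃ n, B n := by
    intro x hx
    have hb : ((x:ℝ):ℂ) ≠ 0 := by
      simp only [ne_eq, Complex.ofReal_eq_zero]
      intro h; rw [h] at hx; exact absurd hx.1 (by norm_num)
    obtain ⟨n, hn⟩ := H (x:ℂ) hb (fun z => z + (C:ℂ))
      (differentiable_id.add_const _) R hR ε hε
    exact mem_iUnion.mpr ⟨n, hn⟩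
  -- openness of the serving sets
  have hopen : ∀ n, IsOpen (B n) := by
    intro n
    rw [Metric.isOpen_iff]
    intro x₀ hx₀
    have hKc : IsCompact (Metric.closedBall (0:ℂ) R) := isCompact_closedBall _ _
    have hKne : (Metric.closedBall (0:ℂ) R).Nonempty := ⟨0, Metric.mem_closedBall_self hR.le⟩
    have hcont1 : ContinuousOn (fun z : ℂ => ‖f (z + lam n * (x₀:ℂ)) - (z + (C:ℂ))‖)
        (Metric.closedBall 0 R) := by
      apply Continuous.continuousOn
      exact ((hf.continuous.comp (continuous_id.add continuous_const)).sub
        (continuous_id.add continuous_const)).norm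
    obtain ⟨z₀, hz₀K, hz₀max'⟩ := hKc.exists_isMaxOn hKne hcont1
    have hz₀max : ∀ z ∈ Metric.closedBall (0:ℂ) R,
        ‖f (z + lam n * (x₀:ℂ)) - (z + (C:ℂ))‖
          ≤ ‖f (z₀ + lam n * (x₀:ℂ)) - (z₀ + (C:ℂ))‖ := fun z hz => hz₀max' hz
    set M : ℝ := ‖f (z₀ + lam n * (x₀:ℂ)) - (z₀ + (C:ℂ))‖ with hM_def
    have hMε : M < ε := hx₀ z₀ (mem_closedBall_zero_iff.mp hz₀K)
    set r : ℝ := (ε - M) / 2 with hr_def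
    have hr : 0 < r := by rw [hr_def]; linarith
    set ρ : ℝ := R + ‖lam n‖ * (|x₀| + 1) + 1 with hρ_def
    have hbigc : IsCompact (Metric.closedBall (0:ℂ) ρ) := isCompact_closedBall _ _
    have huc := hbigc.uniformContinuousOn_of_continuous hf.continuous.continuousOn
    rw [Metric.uniformContinuousOn_iff] at huc
    obtain ⟨δ', hδ'0, hδ'⟩ := huc r hr
    refine ⟨min 1 (δ' / (‖lam n‖ + 1)), by positivity, ?_⟩
    intro y hy
    rw [Metric.mem_ball, Real.dist_eq] at hy
    have hy1 : |y - x₀| < 1 := lt_of_lt_of_le hy (min_le_left _ _)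
    have hyδ : |y - x₀| < δ' / (‖lam n‖ + 1) := lt_of_lt_of_le hy (min_le_right _ _)
    intro z hz
    have hzball : z ∈ Metric.closedBall (0:ℂ) R := mem_closedBall_zero_iff.mpr hz
    have habsy : |y| ≤ |x₀| + 1 := by
      have := abs_sub_abs_le_abs_sub y x₀
      linarith
    have hw1 : (z + lam n * (y:ℂ)) ∈ Metric.closedBall (0:ℂ) ρ := by
      rw [mem_closedBall_zero_iff]
      calc ‖z + lam n * (y:ℂ)‖ ≤ ‖z‖ + ‖lam n * (y:ℂ)‖ := norm_add_le _ _
        _ = ‖z‖ + ‖lam n‖ * |y| := by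
            rw [norm_mul, Complex.norm_real, Real.norm_eq_abs]
        _ ≤ R + ‖lam n‖ * (|x₀| + 1) := by
            have := norm_nonneg (lam n)
            nlinarith
        _ ≤ ρ := by rw [hρ_def]; linarith
    have hw2 : (z + lam n * ((x₀:ℝ):ℂ)) ∈ Metric.closedBall (0:ℂ) ρ := by
      rw [mem_closedBall_zero_iff]
      calc ‖z + lam n * (x₀:ℂ)‖ ≤ ‖z‖ + ‖lam n * (x₀:ℂ)‖ := norm_add_le _ _
        _ = ‖z‖ + ‖lam n‖ * |x₀| := by
            rw [norm_mul, Complex.norm_real, Real.norm_eq_abs]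
        _ ≤ R + ‖lam n‖ * (|x₀| + 1) := by
            have := norm_nonneg (lam n)
            nlinarith [abs_nonneg x₀]
        _ ≤ ρ := by rw [hρ_def]; linarith
    have hdist : dist (z + lam n * (y:ℂ)) (z + lam n * ((x₀:ℝ):ℂ)) < δ' := by
      rw [dist_eq_norm]
      have heq : (z + lam n * (y:ℂ)) - (z + lam n * ((x₀:ℝ):ℂ))
          = lam n * (((y - x₀ : ℝ)):ℂ) := by push_cast; ring
      rw [heq, norm_mul, Complex.norm_real, Real.norm_eq_abs]
      have h1 : ‖lam n‖ * |y - x₀| ≤ (‖lam n‖ + 1) * |y - x₀| := by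
        nlinarith [abs_nonneg (y - x₀)]
      have h2 : (‖lam n‖ + 1) * |y - x₀| < (‖lam n‖ + 1) * (δ' / (‖lam n‖ + 1)) := by
        have hpos : (0:ℝ) < ‖lam n‖ + 1 := by positivity
        exact (mul_lt_mul_iff_right₀ hpos).mpr hyδ
      have h3 : (‖lam n‖ + 1) * (δ' / (‖lam n‖ + 1)) = δ' := by
        field_simp
      linarith
    have hfc := hδ' _ hw1 _ hw2 hdist
    rw [dist_eq_norm] at hfc
    have hmax := hz₀max z hzball
    calc ‖f (z + lam n * (y:ℂ)) - (z + (C:ℂ))‖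
        = ‖(f (z + lam n * (y:ℂ)) - f (z + lam n * ((x₀:ℝ):ℂ)))
          + (f (z + lam n * ((x₀:ℝ):ℂ)) - (z + (C:ℂ)))‖ := by congr 1; ring
      _ ≤ ‖f (z + lam n * (y:ℂ)) - f (z + lam n * ((x₀:ℝ):ℂ))‖
          + ‖f (z + lam n * ((x₀:ℝ):ℂ)) - (z + (C:ℂ))‖ := norm_add_le _ _
      _ < r + M := add_lt_add_of_lt_of_le hfc hmax
      _ < ε := by rw [hr_def]; linarith
  -- finite subcover
  obtain ⟨T, hT⟩ := isCompact_Icc.elim_finite_subcover B hopen hcov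
  set T' : Finset ℕ := T.filter (fun n => N₀ ≤ n) with hT'_def
  have hcov' : Set.Icc (1:ℝ) 2 ⊆ ⋃ n ∈ T', B n := by
    intro x hx
    have hxT := hT hx
    rw [mem_iUnion₂] at hxT
    obtain ⟨k, hkT, hxk⟩ := hxT
    by_cases hkN : N₀ ≤ k
    · exact mem_iUnion₂.mpr ⟨k, Finset.mem_filter.mpr ⟨hkT, hkN⟩, hxk⟩
    · exact absurd hxk (hkill k (by omega) x hx)
  set L : List ℕ := T'.sort (· ≤ ·) with hL_def
  have hchainL : L.Chain' (· < ·) := List.Pairwise.isChain (List.sortedLT_iff_pairwise.mp (Finset.sortedLT_sort T'))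
  have hmemL : ∀ n ∈ L, N₀ ≤ n := by
    intro n hn
    rw [hL_def, Finset.mem_sort] at hn
    exact (Finset.mem_filter.mp hn).2
  have hheadL : ∀ n ∈ L.head?, G ≤ a n * ((2:ℝ) - 1) := by
    intro n hn
    have hnL : n ∈ L := List.mem_of_mem_head? hn
    have := hGa n (hmemL n hnL)
    rw [show (2:ℝ) - 1 = 1 by norm_num, mul_one]
    exact this
  obtain ⟨x, hxI, hxB⟩ := rec_avoid a q G ε N₀ B ha h2q hG hε hqε hbig hP
    L hchainL hmemL 1 2 (by norm_num) hheadL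
  have hxcov := hcov' hxI
  rw [mem_iUnion₂] at hxcov
  obtain ⟨k, hkT', hxk⟩ := hxcov
  exact hxB k (by rw [hL_def, Finset.mem_sort]; exact hkT') hxk
end

section
/- There is no entire function f : ℂ → ℂ such that for every b ∈ ℂ \ {0} the set {z ↦ f(z + e^n·b) : n ∈ ℕ} is dense in the space of entire functions with the topology of locally uniform convergence; equivalently, there is no entire f such that for every non-zero b, every entire g : ℂ → ℂ, every R > 0 and every ε > 0 there exists n ∈ ℕ with sup_{|z| ≤ R} |f(z + e^n·b) − g(z)| < ε. -/
open Filter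

namespace CommonHCAux

local notation "𝕖" => ((Real.exp 1 : ℝ) : ℂ)

/-- One step of the diagonalization: given the evaluation point `c`, choose
`c + 2/5` or `c - 2/5`, whichever stays `7/20`-far from the "bad point" `c - f c`. -/
noncomputable def stepm (f : ℂ → ℂ) (c : ℂ) : ℂ :=
  if (7/20 : ℝ) ≤ ‖(c + 2/5) - (c - f c)‖ then c + 2/5 else c - 2/5

lemma stepm_dist (f : ℂ → ℂ) (c : ℂ) : ‖stepm f c - c‖ = 2/5 := by
  unfold stepm
  by_cases h : (7/20 : ℝ) ≤ ‖(c + 2/5) - (c - f c)‖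
  · rw [if_pos h]
    have h' : (c + 2/5) - c = (2/5 : ℂ) := by ring
    rw [h']; norm_num
  · rw [if_neg h]
    have h' : (c - 2/5) - c = (-(2/5) : ℂ) := by ring
    rw [h']; norm_num

lemma stepm_far (f : ℂ → ℂ) (c : ℂ) : (7/20 : ℝ) ≤ ‖stepm f c - (c - f c)‖ := by
  unfold stepm
  by_cases h : (7/20 : ℝ) ≤ ‖(c + 2/5) - (c - f c)‖
  · rw [if_pos h]; exact h
  · rw [if_neg h]
    push_neg at h
    have h45 : ‖(c + 2/5) - (c - 2/5)‖ = (4/5 : ℝ) := by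
      have h' : (c + 2/5) - (c - 2/5) = (4/5 : ℂ) := by ring
      rw [h']; norm_num
    have tri : ‖(c + 2/5) - (c - 2/5)‖ ≤
        ‖(c + 2/5) - (c - f c)‖ + ‖(c - 2/5) - (c - f c)‖ := by
      calc ‖(c + 2/5) - (c - 2/5)‖
          ≤ ‖(c + 2/5) - (c - f c)‖ + ‖(c - f c) - (c - 2/5)‖ :=
            norm_sub_le_norm_sub_add_norm_sub _ _ _
        _ = ‖(c + 2/5) - (c - f c)‖ + ‖(c - 2/5) - (c - f c)‖ := by
            rw [norm_sub_rev (c - f c)]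
    rw [h45] at tri
    linarith

/-- The sequence of chosen centers `m n = e^n * (b n)`. -/
noncomputable def M (f : ℂ → ℂ) : ℕ → ℂ
  | 0 => stepm f 10
  | n + 1 => stepm f (𝕖 * M f n)

/-- The evaluation point used at stage `n`. -/
noncomputable def q (f : ℂ → ℂ) : ℕ → ℂ
  | 0 => 10
  | n + 1 => 𝕖 * M f n

lemma M_eq (f : ℂ → ℂ) (n : ℕ) : M f n = stepm f (q f n) := by
  cases n <;> rfl

/-- The approximating sequence for the bad direction `b`. -/
noncomputable def bseq (f : ℂ → ℂ) (n : ℕ) : ℂ :=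
  (𝕖 ^ n)⁻¹ * M f n

lemma exp_pos' : (0:ℝ) < Real.exp 1 := Real.exp_pos 1

lemma hEc : 𝕖 ≠ 0 := Complex.ofReal_ne_zero.mpr (ne_of_gt exp_pos')

lemma norm_epow (n : ℕ) : ‖𝕖 ^ n‖ = (Real.exp 1) ^ n := by
  rw [← Complex.ofReal_pow, Complex.norm_real, Real.norm_eq_abs,
    abs_of_pos (pow_pos exp_pos' n)]

lemma cast_exp_nat (n : ℕ) : ((Real.exp (n : ℝ) : ℝ) : ℂ) = 𝕖 ^ n := by
  have h : Real.exp (n : ℝ) = (Real.exp 1) ^ n := by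
    rw [← Real.exp_nat_mul]; norm_num
  rw [h, Complex.ofReal_pow]

lemma bseq_succ (f : ℂ → ℂ) (n : ℕ) :
    (𝕖 ^ (n+1))⁻¹ * (𝕖 * M f n) = bseq f n := by
  simp only [bseq, pow_succ, mul_inv]
  rw [mul_assoc, ← mul_assoc (𝕖)⁻¹, inv_mul_cancel₀ hEc, one_mul]

lemma bseq_dist (f : ℂ → ℂ) (n : ℕ) :
    dist (bseq f n) (bseq f (n + 1)) =
      (2/5) * (Real.exp 1)⁻¹ * ((Real.exp 1)⁻¹) ^ n := by
  rw [dist_eq_norm, ← bseq_succ f n]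
  have h1 : (𝕖 ^ (n+1))⁻¹ * (𝕖 * M f n) - bseq f (n+1)
      = (𝕖 ^ (n+1))⁻¹ * (𝕖 * M f n - M f (n+1)) := by
    simp only [bseq]; ring
  rw [h1, norm_mul]
  have h2 : ‖𝕖 * M f n - M f (n+1)‖ = 2/5 := by
    have hMn : M f (n+1) = stepm f (𝕖 * M f n) := rfl
    rw [hMn, norm_sub_rev]
    exact stepm_dist f _
  rw [h2, norm_inv, norm_epow]
  rw [pow_succ, mul_inv, inv_pow]
  ring

end CommonHCAux

open CommonHCAux in
/-- There is no entire function which is hypercyclic for all the translation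
families `(T_{e^n b})`, `b ≠ 0`. -/
theorem no_common_hypercyclic_exp :
    ¬ ∃ f : ℂ → ℂ, Differentiable ℂ f ∧
      ∀ b : ℂ, b ≠ 0 → ∀ g : ℂ → ℂ, Differentiable ℂ g →
        ∀ R > (0 : ℝ), ∀ ε > (0 : ℝ), ∃ n : ℕ,
          ∀ z : ℂ, ‖z‖ ≤ R → ‖f (z + (Real.exp n : ℂ) * b) - g z‖ < ε := by
  rintro ⟨f, -, hf⟩
  have hE : (2.7 : ℝ) < Real.exp 1 := lt_trans (by norm_num) Real.exp_one_gt_d9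
  have hE0 : (0 : ℝ) < Real.exp 1 := Real.exp_pos 1
  have hr : (Real.exp 1)⁻¹ < 1 := by
    rw [inv_lt_one_iff₀]; right; linarith
  have hdist' : ∀ n : ℕ, dist (bseq f n) (bseq f (n + 1)) ≤
      ((2/5) * (Real.exp 1)⁻¹) * ((Real.exp 1)⁻¹) ^ n := by
    intro n
    rw [bseq_dist f n]
  obtain ⟨b, hb⟩ := cauchySeq_tendsto_of_complete
    (cauchySeq_of_le_geometric _ _ hr hdist')
  have hclose : ∀ n : ℕ, dist (bseq f n) b ≤ (1/4) * ((Real.exp 1)⁻¹) ^ n := by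
    intro n
    have h := dist_le_of_le_geometric_of_tendsto _ _ hr hdist' hb n
    have hipos : (0:ℝ) < (Real.exp 1)⁻¹ := inv_pos.mpr hE0
    have h1mr : (0:ℝ) < 1 - (Real.exp 1)⁻¹ := by linarith
    have hprod : (Real.exp 1)⁻¹ * Real.exp 1 = 1 := inv_mul_cancel₀ (ne_of_gt hE0)
    have hconst : (2/5) * (Real.exp 1)⁻¹ / (1 - (Real.exp 1)⁻¹) ≤ 1/4 := by
      rw [div_le_iff₀ h1mr]
      nlinarith [mul_lt_mul_of_pos_left hE hipos]
    calc dist (bseq f n) b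
        ≤ (2/5) * (Real.exp 1)⁻¹ * ((Real.exp 1)⁻¹) ^ n / (1 - (Real.exp 1)⁻¹) := h
      _ = ((2/5) * (Real.exp 1)⁻¹ / (1 - (Real.exp 1)⁻¹)) * ((Real.exp 1)⁻¹) ^ n := by
          ring
      _ ≤ (1/4) * ((Real.exp 1)⁻¹) ^ n := by
          apply mul_le_mul_of_nonneg_right hconst
          positivity
  -- the scaled closeness: ‖M f n - e^n * b‖ ≤ 1/4
  have hMb : ∀ n : ℕ, ((Real.exp 1 : ℝ) : ℂ) ^ n * bseq f n = M f n := by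
    intro n
    rw [bseq, mul_inv_cancel_left₀ (pow_ne_zero n hEc)]
  have hMclose : ∀ n : ℕ, ‖M f n - ((Real.exp 1 : ℝ) : ℂ) ^ n * b‖ ≤ 1/4 := by
    intro n
    have h1 : M f n - ((Real.exp 1 : ℝ) : ℂ) ^ n * b
        = ((Real.exp 1 : ℝ) : ℂ) ^ n * (bseq f n - b) := by
      rw [← hMb n]; ring
    rw [h1, norm_mul, norm_epow]
    have hd := hclose n
    rw [dist_eq_norm] at hd
    have hEn : (0:ℝ) < (Real.exp 1) ^ n := pow_pos hE0 n
    calc (Real.exp 1) ^ n * ‖bseq f n - b‖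
        ≤ (Real.exp 1) ^ n * ((1/4) * ((Real.exp 1)⁻¹) ^ n) :=
          mul_le_mul_of_nonneg_left hd (le_of_lt hEn)
      _ = 1/4 := by
          rw [inv_pow]
          field_simp
  -- b ≠ 0
  have hb0 : b ≠ 0 := by
    intro h0
    subst h0
    have h1 := hMclose 0
    simp only [pow_zero, one_mul, mul_zero, sub_zero] at h1
    have h2 : ‖(10:ℂ) - M f 0‖ = 2/5 := by
      rw [norm_sub_rev]
      exact stepm_dist f 10
    have h5 : ‖(10:ℂ)‖ ≤ ‖(10:ℂ) - M f 0‖ + ‖M f 0‖ := by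
      calc ‖(10:ℂ)‖ = ‖((10:ℂ) - M f 0) + M f 0‖ := by rw [sub_add_cancel]
        _ ≤ ‖(10:ℂ) - M f 0‖ + ‖M f 0‖ := norm_add_le _ _
    have h3 : ‖(10:ℂ)‖ = 10 := by norm_num
    rw [h3, h2] at h5
    linarith
  -- apply the hypothesis with g = id, R = 1, ε = 1/10
  obtain ⟨n, hn⟩ := hf b hb0 (fun z => z) differentiable_id 1 one_pos (1/10) (by norm_num)
  set c : ℂ := q f n with hc
  set z : ℂ := c - ((Real.exp 1 : ℝ) : ℂ) ^ n * b with hz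
  have hMq : ‖M f n - c‖ = 2/5 := by rw [M_eq]; exact stepm_dist f c
  have hzn : ‖z‖ ≤ 1 := by
    have h1 : z = (c - M f n) + (M f n - ((Real.exp 1 : ℝ) : ℂ) ^ n * b) := by
      rw [hz]; ring
    rw [h1]
    calc ‖(c - M f n) + (M f n - ((Real.exp 1 : ℝ) : ℂ) ^ n * b)‖
        ≤ ‖c - M f n‖ + ‖M f n - ((Real.exp 1 : ℝ) : ℂ) ^ n * b‖ := norm_add_le _ _
      _ ≤ 2/5 + 1/4 := by
          refine add_le_add ?_ (hMclose n)
          rw [norm_sub_rev]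
          exact le_of_eq hMq
      _ ≤ 1 := by norm_num
  have hkill : (1/10 : ℝ) ≤ ‖f (z + ((Real.exp (n : ℝ) : ℝ) : ℂ) * b) - z‖ := by
    have harg : z + ((Real.exp (n : ℝ) : ℝ) : ℂ) * b = c := by
      rw [cast_exp_nat n, hz]; ring
    rw [harg]
    have hfar : (7/20 : ℝ) ≤ ‖M f n - (c - f c)‖ := by
      rw [M_eq]; exact stepm_far f c
    have hsplit : f c - z
        = (M f n - (c - f c)) - (M f n - ((Real.exp 1 : ℝ) : ℂ) ^ n * b) := by
      rw [hz]; ring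
    calc (1/10 : ℝ) = 7/20 - 1/4 := by norm_num
      _ ≤ ‖M f n - (c - f c)‖ - ‖M f n - ((Real.exp 1 : ℝ) : ℂ) ^ n * b‖ :=
          sub_le_sub hfar (hMclose n)
      _ ≤ ‖(M f n - (c - f c)) - (M f n - ((Real.exp 1 : ℝ) : ℂ) ^ n * b)‖ :=
          norm_sub_norm_le _ _
      _ = ‖f c - z‖ := by rw [← hsplit]
  exact absurd (hn z hzn) (not_lt.mpr hkill)
end

section
/- Let I ⊆ ℝ be a compact interval and let V ⊆ I be a set that is open in ℝ. Let a, A be positive real numbers with 2a ≤ A, and suppose that for all x, x̃ ∈ V, either |x − x̃| < a or |x − x̃| > A. Then at least one of the following holds: (i) the diameter of V is at most a; (ii) I \ V contains a closed interval of length A, i.e., there exists c ∈ ℝ with [c, c + A] ⊆ I \ V. -/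
/-- Lemma 1: if any two points of an open set `V` inside a compact interval are at
distance `< a` or `> A` (with `2a ≤ A`), then either `diam V ≤ a` or the complement
`I \ V` contains a closed interval of length `A`. -/
theorem diam_small_or_compl_contains_interval
    (s t : ℝ) (hst : s ≤ t) (V : Set ℝ) (hVI : V ⊆ Set.Icc s t) (hVopen : IsOpen V)
    (a A : ℝ) (ha : 0 < a) (hA : 0 < A) (h2a : 2 * a ≤ A)
    (hsep : ∀ x ∈ V, ∀ y ∈ V, |x - y| < a ∨ A < |x - y|) :
    Metric.diam V ≤ a ∨ ∃ c : ℝ, Set.Icc c (c + A) ⊆ Set.Icc s t \ V := by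
  by_cases hdiam : Metric.diam V ≤ a
  · exact Or.inl hdiam
  right
  obtain ⟨x, hx, y, hy, hxy⟩ : ∃ x ∈ V, ∃ y ∈ V, x + A < y := by
    obtain ⟨p, hp, q, hq, hpq⟩ : ∃ p ∈ V, ∃ q ∈ V, a < dist p q := by
      by_contra h
      push_neg at h
      exact hdiam (Metric.diam_le_of_forall_dist_le ha.le fun p hp q hq => h p hp q hq)
    rw [Real.dist_eq] at hpq
    have h1 : A < |p - q| := (hsep p hp q hq).resolve_left (not_lt.2 hpq.le)
    rcases abs_cases (p - q) with ⟨he, _⟩ | ⟨he, _⟩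
    · exact ⟨q, hq, p, hp, by linarith⟩
    · exact ⟨p, hp, q, hq, by linarith⟩
  set C : Set ℝ := {z | z ∈ V ∧ |z - x| < a} with hC
  have hxC : x ∈ C := ⟨hx, by simpa using ha⟩
  have hCne : C.Nonempty := ⟨x, hxC⟩
  have hCbdd : BddAbove C := ⟨x + a, fun z hz => by have := abs_lt.1 hz.2; linarith⟩
  set u := sSup C with hu
  have hxu : x ≤ u := le_csSup hCbdd hxC
  have hua : u ≤ x + a := csSup_le hCne fun z hz => by have := abs_lt.1 hz.2; linarith
  -- key: any point of V strictly above u is at least u + A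
  have key : ∀ z ∈ V, u < z → u + A ≤ z := by
    intro z hz huz
    have hzx : A < z - x := by
      rcases hsep z hz x hx with h | h
      · exact absurd (le_csSup hCbdd ⟨hz, h⟩) (not_le.2 huz)
      · have h0 : 0 ≤ z - x := by linarith
        rwa [abs_of_nonneg h0] at h
    have hub : ∀ p ∈ C, p ≤ z - A := by
      intro p hp
      have hpa := abs_lt.1 hp.2
      have h1 : a < z - p := by linarith
      rcases hsep z hz p hp.1 with h | h
      · exfalso; rw [abs_of_pos (by linarith : (0:ℝ) < z - p)] at h; linarith
      · rw [abs_of_pos (by linarith : (0:ℝ) < z - p)] at h; linarith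
    have := csSup_le hCne hub
    linarith
  have huy : u + A ≤ y := key y hy (by linarith)
  have huV : u ∉ V := by
    intro huV
    obtain ⟨ε, hε, hball⟩ := Metric.isOpen_iff.1 hVopen u huV
    have hux : u - x < a := by
      rcases hsep u huV x hx with h | h
      · rwa [abs_of_nonneg (by linarith : (0:ℝ) ≤ u - x)] at h
      · exfalso; rw [abs_of_nonneg (by linarith : (0:ℝ) ≤ u - x)] at h; linarith
    set δ := min (ε / 2) ((a - (u - x)) / 2) with hδ
    have hδpos : 0 < δ := lt_min (by linarith) (by linarith)
    have hmem : u + δ ∈ V := hball (by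
      simp only [Metric.mem_ball, Real.dist_eq]
      rw [abs_of_nonneg (by linarith : (0:ℝ) ≤ u + δ - u)]
      have := min_le_left (ε / 2) ((a - (u - x)) / 2)
      linarith)
    have hmemC : u + δ ∈ C := by
      refine ⟨hmem, ?_⟩
      have h2 := min_le_right (ε / 2) ((a - (u - x)) / 2)
      rw [abs_of_nonneg (by linarith : (0:ℝ) ≤ u + δ - x)]
      linarith
    have := le_csSup hCbdd hmemC
    linarith
  refine ⟨u, fun z hz => ?_⟩
  obtain ⟨hz1, hz2⟩ := hz
  refine ⟨⟨?_, ?_⟩, ?_⟩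
  · have := (hVI hx).1; linarith
  · have := (hVI hy).2; linarith
  · intro hzV
    have hzu : u < z := lt_of_le_of_ne hz1 (fun h => huV (h ▸ hzV))
    obtain ⟨ε, hε, hball⟩ := Metric.isOpen_iff.1 hVopen z hzV
    set δ := min (ε / 2) ((z - u) / 2) with hδ
    have hδpos : 0 < δ := lt_min (by linarith) (by linarith)
    have hmem : z - δ ∈ V := hball (by
      simp only [Metric.mem_ball, Real.dist_eq]
      rw [abs_of_nonpos (by linarith : z - δ - z ≤ 0)]
      have := min_le_left (ε / 2) ((z - u) / 2)
      linarith)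
    have h2 := min_le_right (ε / 2) ((z - u) / 2)
    have := key (z - δ) hmem (by linarith)
    linarith
end

section
/- Let a, A be positive real numbers with 2a ≤ A. Let I ⊆ ℝ be a compact interval and let V ⊆ I be a set that is open in ℝ. Assume that (i) the length of I is at least 2A + a, and (ii) for all x, y ∈ V, either |x − y| < a or |x − y| > A. Then I \ V contains a closed interval of length A, i.e., there exists c ∈ ℝ with [c, c + A] ⊆ I \ V. -/
/-- Corollary 1: if moreover the interval has length at least `2A + a`, then
`I \ V` contains a closed interval of length `A`. -/
theorem compl_contains_interval
    (a A : ℝ) (ha : 0 < a) (hA : 0 < A) (h2a : 2 * a ≤ A)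
    (s t : ℝ) (hst : s ≤ t) (hlen : 2 * A + a ≤ t - s)
    (V : Set ℝ) (hVI : V ⊆ Set.Icc s t) (hVopen : IsOpen V)
    (hsep : ∀ x ∈ V, ∀ y ∈ V, |x - y| < a ∨ A < |x - y|) :
    ∃ c : ℝ, Set.Icc c (c + A) ⊆ Set.Icc s t \ V := by
  by_cases hV : ∀ z ∈ Set.Icc s (s + A), z ∉ V
  · exact ⟨s, fun z hz => ⟨⟨hz.1, hz.2.trans (by linarith)⟩, hV z hz⟩⟩
  · push_neg at hV
    obtain ⟨x, hxI, hxV⟩ := hV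
    obtain ⟨hxs, hxsA⟩ := hxI
    set C := V ∩ Set.Ioo (x - a) (x + a) with hC
    have hxC : x ∈ C := ⟨hxV, by constructor <;> linarith⟩
    have hbdd : BddAbove C := ⟨x + a, fun y hy => le_of_lt hy.2.2⟩
    have hne : C.Nonempty := ⟨x, hxC⟩
    set d := sSup C with hd
    have hdx : x ≤ d := le_csSup hbdd hxC
    have hdxa : d ≤ x + a := csSup_le hne fun y hy => le_of_lt hy.2.2
    refine ⟨d, fun z hz => ⟨⟨by linarith [hz.1], by linarith [hz.2]⟩, ?_⟩⟩
    obtain ⟨hdz, hzdA⟩ := hz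
    intro hzV
    by_cases hzC : z ∈ C
    · have hzd : z ≤ d := le_csSup hbdd hzC
      have hCopen : IsOpen C := hVopen.inter isOpen_Ioo
      obtain ⟨ε, hε, hball⟩ := Metric.isOpen_iff.mp hCopen z hzC
      have hmem : z + ε / 2 ∈ C := by
        apply hball
        simp only [Metric.mem_ball, Real.dist_eq]
        rw [abs_of_nonneg (by linarith)]
        linarith
      have := le_csSup hbdd hmem
      linarith
    · have hzx : A < |z - x| := by
        rcases hsep z hzV x hxV with h | h
        · exact absurd ⟨hzV, by
            rw [abs_sub_lt_iff] at h
            exact ⟨by linarith [h.1], by linarith [h.2]⟩⟩ hzC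
        · exact h
      rw [abs_of_nonneg (by linarith)] at hzx
      have hyA : ∀ y ∈ C, y + A < z := by
        intro y hy
        rcases hsep z hzV y hy.1 with h | h
        · exfalso
          rw [abs_sub_lt_iff] at h
          have := hy.2.2
          linarith [h.1]
        · rw [abs_of_nonneg (by linarith [hy.2.2])] at h
          linarith
      have hdA : d ≤ z - A := csSup_le hne fun y hy => by linarith [hyA y hy]
      have hzeq : z = d + A := by linarith
      obtain ⟨δ, hδ, hball⟩ := Metric.isOpen_iff.mp hVopen z hzV
      set ε := min (δ / 2) ((A - a) / 2) with hε
      have hεpos : 0 < ε := lt_min (by linarith) (by linarith)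
      have hεδ : ε < δ := lt_of_le_of_lt (min_le_left _ _) (by linarith)
      have hεA : ε < A - a := lt_of_le_of_lt (min_le_right _ _) (by linarith)
      have hz'V : z - ε ∈ V := hball (by
        simp only [Metric.mem_ball, Real.dist_eq]
        rw [abs_of_nonpos (by linarith)]
        linarith)
      obtain ⟨y, hyC, hy⟩ := exists_lt_of_lt_csSup hne (show d - ε < d by linarith)
      have hyd : y ≤ d := le_csSup hbdd hyC
      rcases hsep (z - ε) hz'V y hyC.1 with h | h
      · rw [abs_sub_lt_iff] at h
        linarith [h.1]
      · rw [abs_of_nonneg (by linarith)] at h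
        linarith
end

section
/- Let a, A be positive real numbers with 2a ≤ A. Let I ⊆ ℂ be a line segment (the closed segment joining two points u, v ∈ ℂ) and let V ⊆ ℂ be a set that is open in ℂ. Assume that (i) the length |u − v| of I is at least 2A + a, and (ii) for all z, w ∈ V, either |z − w| < a or |z − w| > A. Then I \ V contains a line segment of length A, i.e., there exist p, q ∈ I with |p − q| = A and the closed segment joining p and q is contained in I \ V. -/
open Set

/-- One-dimensional core: in `[0, L]` with `L ≥ 2A + a`, any open set `T` whose points
are pairwise at distance `< a` or `> A` misses a closed interval of length `A`. -/
lemma exists_gap_aux (a A L : ℝ) (ha : 0 < a) (hA : 0 < A) (h2a : 2 * a ≤ A)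
    (hL : 2 * A + a ≤ L) (T : Set ℝ) (hT : IsOpen T)
    (hsep : ∀ s ∈ T, ∀ t ∈ T, |s - t| < a ∨ A < |s - t|) :
    ∃ c, 0 ≤ c ∧ c + A ≤ L ∧ ∀ t, c ≤ t → t ≤ c + A → t ∉ T := by
  have hAL : A ≤ L := by nlinarith
  by_cases hS : (T ∩ Icc 0 L).Nonempty
  · set S := T ∩ Icc 0 L with hSdef
    have hbdd : BddBelow S := ⟨0, fun x hx => hx.2.1⟩
    set s := sInf S with hsdef
    have hs0 : 0 ≤ s := le_csInf hS fun x hx => hx.2.1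
    have hsle : ∀ t ∈ S, s ≤ t := fun t ht => csInf_le hbdd ht
    have hexlt : ∀ x, s < x → ∃ t ∈ S, t < x := fun x hx => exists_lt_of_csInf_lt hS hx
    by_cases hsA : A ≤ s
    · -- first case: T starts beyond A, take [0, A]
      refine ⟨0, le_refl _, by linarith, fun t ht1 ht2 htT => ?_⟩
      have htS : t ∈ S := ⟨htT, ht1, by linarith⟩
      have hst : s ≤ t := hsle t htS
      have hts : t = s := le_antisymm (by linarith) hst
      rcases Metric.isOpen_iff.1 hT t htT with ⟨ε, hε, hball⟩
      set δ := min (ε/2) (A/2) with hδdef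
      have hδ0 : 0 < δ := by positivity
      have hδε : δ < ε := lt_of_le_of_lt (min_le_left _ _) (by linarith)
      have hδA : δ < A := lt_of_le_of_lt (min_le_right _ _) (by linarith)
      have h1 : t - δ ∈ T := by
        apply hball
        rw [Metric.mem_ball, Real.dist_eq]
        rw [abs_of_nonpos (by linarith)]
        linarith
      have h2 : t - δ ∈ S := ⟨h1, by linarith, by linarith⟩
      have := hsle _ h2
      linarith
    · push_neg at hsA
      set S' := S ∩ Iic (s + a) with hS'def
      have hS'ne : S'.Nonempty := by
        obtain ⟨t, htS, htlt⟩ := hexlt (s + a) (by linarith)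
        exact ⟨t, htS, le_of_lt htlt⟩
      have hS'bdd : BddAbove S' := ⟨s + a, fun x hx => hx.2⟩
      set M := sSup S' with hMdef
      have hM0 : 0 ≤ M := by
        obtain ⟨t, ht⟩ := hS'ne
        exact le_trans ht.1.2.1 (le_csSup hS'bdd ht)
      have hMle : M ≤ s + a := csSup_le hS'ne fun x hx => hx.2
      have hMleS : ∀ t ∈ S', t ≤ M := fun t ht => le_csSup hS'bdd ht
      -- key 1: no points of S in (s+a, s+A]
      have key1 : ∀ t ∈ S, t ≤ s + a ∨ s + A < t := by
        intro t ht
        by_contra hcon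
        push_neg at hcon
        obtain ⟨h1, h2⟩ := hcon
        obtain ⟨t', ht'S, ht'lt⟩ := hexlt (t - a) (by linarith)
        have hst' : s ≤ t' := hsle t' ht'S
        have habs : |t - t'| = t - t' := abs_of_nonneg (by linarith)
        rcases hsep t ht.1 t' ht'S.1 with h | h <;> rw [habs] at h <;> linarith
      -- key 2: points beyond s+a are at distance > A from all of S'
      have key2 : ∀ t ∈ S, s + a < t → ∀ t' ∈ S', t' + A < t := by
        intro t ht hta t' ht'
        have htA : s + A < t := (key1 t ht).resolve_left (by linarith)
        have ht's : s ≤ t' := hsle t' ht'.1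
        have ht'a : t' ≤ s + a := ht'.2
        have habs : |t - t'| = t - t' := abs_of_nonneg (by linarith)
        rcases hsep t ht.1 t' ht'.1.1 with h | h <;> rw [habs] at h
        · linarith
        · linarith
      -- key 3: S avoids (M, M + A)
      have key3 : ∀ t ∈ S, t ≤ M ∨ M + A ≤ t := by
        intro t ht
        by_cases h : t ≤ s + a
        · exact Or.inl (hMleS t ⟨ht, h⟩)
        · push_neg at h
          right
          have : M ≤ t - A := csSup_le hS'ne fun t' ht' => by
            have := key2 t ht h t' ht'
            linarith
          linarith
      have hMA : M + A ≤ L := by linarith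
      refine ⟨M, hM0, hMA, fun t ht1 ht2 htT => ?_⟩
      have htS : t ∈ S := ⟨htT, by linarith, by linarith⟩
      have htmm : t = M ∨ t = M + A := by
        rcases key3 t htS with h | h
        · exact Or.inl (le_antisymm h ht1)
        · exact Or.inr (le_antisymm ht2 h)
      rcases Metric.isOpen_iff.1 hT t htT with ⟨ε, hε, hball⟩
      set δ := min (ε/2) (A/2) with hδdef
      have hδ0 : 0 < δ := by positivity
      have hδε : δ < ε := lt_of_le_of_lt (min_le_left _ _) (by linarith)
      have hδA2 : δ ≤ A/2 := min_le_right _ _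
      rcases htmm with rfl | rfl
      · -- t = M : point just above M is in S, contradicting key3
        have h1 : M + δ ∈ T := by
          apply hball
          rw [Metric.mem_ball, Real.dist_eq, abs_of_nonneg (by linarith)]
          linarith
        have h2 : M + δ ∈ S := ⟨h1, by linarith, by linarith⟩
        rcases key3 _ h2 with h | h <;> linarith
      · -- t = M + A : point just below is in S, contradicting key3
        have h1 : M + A - δ ∈ T := by
          apply hball
          rw [Metric.mem_ball, Real.dist_eq, abs_of_nonpos (by linarith)]
          linarith
        have h2 : M + A - δ ∈ S := ⟨h1, by linarith, by linarith⟩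
        rcases key3 _ h2 with h | h <;> linarith
  · refine ⟨0, le_refl _, by linarith, fun t ht1 ht2 htT => ?_⟩
    exact hS ⟨t, htT, ht1, by linarith⟩

/-- Corollary 2 (complex version): a line segment of length at least `2A + a` minus
an open set `V` (any two of whose points are at distance `< a` or `> A`, `2a ≤ A`)
contains a line segment of length `A`. -/
theorem segment_diff_contains_segment
    (a A : ℝ) (ha : 0 < a) (hA : 0 < A) (h2a : 2 * a ≤ A)
    (u v : ℂ) (hlen : 2 * A + a ≤ ‖u - v‖)
    (V : Set ℂ) (hVopen : IsOpen V)
    (hsep : ∀ z ∈ V, ∀ w ∈ V, ‖z - w‖ < a ∨ A < ‖z - w‖) :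
    ∃ p ∈ segment ℝ u v, ∃ q ∈ segment ℝ u v,
      ‖p - q‖ = A ∧ segment ℝ p q ⊆ segment ℝ u v \ V := by
  set L : ℝ := ‖u - v‖ with hLdef
  have hL0 : (0:ℝ) < L := by nlinarith
  set f : ℝ → ℂ := fun t => u + (t / L) • (v - u) with hfdef
  have hsub : ∀ s t : ℝ, f s - f t = ((s - t)/L) • (v - u) := by
    intro s t
    have h : (s - t)/L = s/L - t/L := sub_div s t L
    rw [h]
    simp only [hfdef]
    module
  have hnorm : ∀ s t : ℝ, ‖f s - f t‖ = |s - t| := by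
    intro s t
    rw [hsub, norm_smul, Real.norm_eq_abs, abs_div,
      abs_of_pos hL0, norm_sub_rev v u, ← hLdef, div_mul_cancel₀]
    exact ne_of_gt hL0
  have hmem : ∀ t : ℝ, 0 ≤ t → t ≤ L → f t ∈ segment ℝ u v := by
    intro t ht0 htL
    rw [segment_eq_image']
    exact ⟨t / L, ⟨div_nonneg ht0 hL0.le, (div_le_one hL0).2 htL⟩, rfl⟩
  have haff : ∀ c θ : ℝ, f c + θ • (f (c + A) - f c) = f (c + θ * A) := by
    intro c θ
    rw [hsub]
    have h1 : (c + A - c)/L = A / L := by ring_nf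
    have h2 : (c + θ * A)/L = c / L + θ * (A / L) := by ring
    rw [h1]
    simp only [hfdef, h2]
    module
  have hfc : Continuous f := by
    apply continuous_const.add
    exact (continuous_id.div_const L).smul continuous_const
  obtain ⟨c, hc0, hcA, hgap⟩ := exists_gap_aux a A L ha hA h2a hlen (f ⁻¹' V)
    (hVopen.preimage hfc)
    (fun s hs t ht => by rw [← hnorm s t]; exact hsep (f s) hs (f t) ht)
  refine ⟨f c, hmem c hc0 (by linarith), f (c + A), hmem (c + A) (by linarith) hcA, ?_, ?_⟩
  · rw [hnorm]
    rw [abs_of_nonpos (by linarith)]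
    ring
  · intro x hx
    rw [segment_eq_image'] at hx
    obtain ⟨θ, ⟨hθ0, hθ1⟩, rfl⟩ := hx
    show f c + θ • (f (c + A) - f c) ∈ _
    rw [haff]
    constructor
    · exact hmem _ (by nlinarith) (by nlinarith)
    · exact hgap _ (by nlinarith) (by nlinarith)
end

section
/- Let k > 0 be a real number, λ ∈ ℂ \ {0}, and f : ℂ → ℂ any function. Define V_λ(f,k) = { b ∈ ℂ : sup_{|z| ≤ k} |f(z + λ·b) − z| < 1/k }. If b₁, b₂ ∈ V_λ(f,k), then either |b₁ − b₂| < 2/(k·|λ|) or |b₁ − b₂| > 2k/|λ|. -/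
/-- Lemma 3: any two points of `V_λ(f,k)` are at distance `< 2/(k|λ|)` or `> 2k/|λ|`. -/
theorem dist_mem_V_lt_or_gt
    (k : ℝ) (hk : 0 < k) (lam : ℂ) (hlam : lam ≠ 0) (f : ℂ → ℂ)
    (b₁ b₂ : ℂ)
    (hb₁ : ∀ z : ℂ, ‖z‖ ≤ k → ‖f (z + lam * b₁) - z‖ < 1 / k)
    (hb₂ : ∀ z : ℂ, ‖z‖ ≤ k → ‖f (z + lam * b₂) - z‖ < 1 / k) :
    ‖b₁ - b₂‖ < 2 / (k * ‖lam‖) ∨ 2 * k / ‖lam‖ < ‖b₁ - b₂‖ := by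
  by_contra h
  push_neg at h
  obtain ⟨h1, h2⟩ := h
  have hl : 0 < ‖lam‖ := norm_pos_iff.mpr hlam
  set w : ℂ := lam * (b₂ - b₁) with hw
  have hwnorm : ‖w‖ = ‖lam‖ * ‖b₁ - b₂‖ := by
    rw [hw, norm_mul, ← norm_neg (b₂ - b₁)]; ring_nf
  have hwle : ‖w‖ ≤ 2 * k := by
    rw [hwnorm]
    calc ‖lam‖ * ‖b₁ - b₂‖ ≤ ‖lam‖ * (2 * k / ‖lam‖) := by
          exact mul_le_mul_of_nonneg_left h2 hl.le
      _ = 2 * k := by rw [mul_div_assoc']; exact mul_div_cancel_left₀ _ hl.ne'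
  have hwge : 2 / k ≤ ‖w‖ := by
    rw [hwnorm]
    calc 2 / k = ‖lam‖ * (2 / (k * ‖lam‖)) := by
          rw [mul_comm k, mul_div_assoc', mul_div_mul_left _ _ hl.ne']
      _ ≤ ‖lam‖ * ‖b₁ - b₂‖ := mul_le_mul_of_nonneg_left h1 hl.le
  have hz : ‖w / 2‖ ≤ k := by
    rw [norm_div]
    simp only [Complex.norm_ofNat]
    linarith [hwle]
  have e1 := hb₁ (w / 2) hz
  have e2 := hb₂ (-(w / 2)) (by rwa [norm_neg])
  have hpt : -(w / 2) + lam * b₂ = w / 2 + lam * b₁ := by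
    rw [hw]; ring
  rw [hpt] at e2
  have key : ‖w‖ < 2 / k := by
    have := norm_sub_le (f (w / 2 + lam * b₁) - w / 2 : ℂ)
      (f (w / 2 + lam * b₁) - -(w / 2))
    have heq : (f (w / 2 + lam * b₁) - w / 2) - (f (w / 2 + lam * b₁) - -(w / 2)) = -w := by
      ring
    calc ‖w‖ = ‖(f (w / 2 + lam * b₁) - w / 2) - (f (w / 2 + lam * b₁) - -(w / 2))‖ := by
          rw [heq, norm_neg]
      _ ≤ ‖f (w / 2 + lam * b₁) - w / 2‖ + ‖f (w / 2 + lam * b₁) - -(w / 2)‖ := norm_sub_le _ _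
      _ < 1 / k + 1 / k := add_lt_add e1 e2
      _ = 2 / k := by ring
  linarith
end

section
/- Let I ⊆ ℝ be a compact interval, V ⊆ I a set that is open in ℝ, and a, A positive real numbers with 2a ≤ A such that for all x, y ∈ V, either |x − y| < a or |x − y| > A. Then there exist finitely many pairwise disjoint sets V₁, …, V_n, each open in ℝ, whose union equals V, such that each V_i has diameter at most a, and dist(V_i, V_j) ≥ A for all i ≠ j (i.e., |x − y| ≥ A whenever x ∈ V_i, y ∈ V_j, i ≠ j). -/
/-- An open set `V` inside a compact interval, any two of whose points are at distance
`< a` or `> A` (`2a ≤ A`), splits into finitely many pairwise disjoint open pieces of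
diameter at most `a`, any two of which are at distance at least `A`. -/
theorem open_set_splits_into_clusters
    (s t : ℝ) (hst : s ≤ t) (V : Set ℝ) (hVI : V ⊆ Set.Icc s t) (hVopen : IsOpen V)
    (a A : ℝ) (ha : 0 < a) (hA : 0 < A) (h2a : 2 * a ≤ A)
    (hsep : ∀ x ∈ V, ∀ y ∈ V, |x - y| < a ∨ A < |x - y|) :
    ∃ (n : ℕ) (W : Fin n → Set ℝ),
      (∀ i, IsOpen (W i)) ∧
      (⋃ i, W i) = V ∧
      (∀ i j, i ≠ j → Disjoint (W i) (W j)) ∧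
      (∀ i, Metric.diam (W i) ≤ a) ∧
      (∀ i j, i ≠ j → ∀ x ∈ W i, ∀ y ∈ W j, A ≤ |x - y|) := by
  classical
  set cls : ℝ → Set ℝ := fun x => V ∩ Metric.ball x a with hcls
  have hmem_cls : ∀ {x y : ℝ}, y ∈ cls x ↔ y ∈ V ∧ |y - x| < a := by
    intro x y; simp [hcls, Metric.mem_ball, Real.dist_eq]
  have hself : ∀ x ∈ V, x ∈ cls x := by
    intro x hx; exact hmem_cls.mpr ⟨hx, by simpa using ha⟩
  have hcls_sub : ∀ x, cls x ⊆ V := fun x => Set.inter_subset_left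
  have hsmall : ∀ x ∈ V, ∀ y ∈ V, |x - y| < 2 * a → |x - y| < a := by
    intro x hx y hy h
    rcases hsep x hx y hy with h' | h'
    · exact h'
    · linarith
  have hsub : ∀ x ∈ V, ∀ y ∈ V, |x - y| < a → cls y ⊆ cls x := by
    intro x hx y hy hxy z hz
    rcases hmem_cls.mp hz with ⟨hzV, hzy⟩
    refine hmem_cls.mpr ⟨hzV, ?_⟩
    have h1 : |z - x| ≤ |z - y| + |y - x| := abs_sub_le z y x
    have h2 : |y - x| = |x - y| := abs_sub_comm y x
    exact hsmall z hzV x hx (by linarith)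
  have heq : ∀ x ∈ V, ∀ y ∈ V, |x - y| < a → cls x = cls y := by
    intro x hx y hy hxy
    exact Set.Subset.antisymm (hsub y hy x hx (by rwa [abs_sub_comm]))
      (hsub x hx y hy hxy)
  have hdisj : ∀ x ∈ V, ∀ y ∈ V, cls x ≠ cls y → Disjoint (cls x) (cls y) := by
    intro x hx y hy hne
    rw [Set.disjoint_left]
    intro u hux huy
    rcases hmem_cls.mp hux with ⟨huV, hux'⟩
    rcases hmem_cls.mp huy with ⟨_, huy'⟩
    have h1 : |x - y| ≤ |x - u| + |u - y| := abs_sub_le x u y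
    have h2 : |x - u| = |u - x| := abs_sub_comm x u
    have : |x - y| < a := hsmall x hx y hy (by linarith)
    exact hne (heq x hx y hy this)
  have hfar : ∀ x ∈ V, ∀ y ∈ V, cls x ≠ cls y →
      ∀ u ∈ cls x, ∀ v ∈ cls y, A ≤ |u - v| := by
    intro x hx y hy hne u hu v hv
    by_contra hlt
    push_neg at hlt
    rcases hmem_cls.mp hu with ⟨huV, hux⟩
    rcases hmem_cls.mp hv with ⟨hvV, hvy⟩
    have huv : |u - v| < a := by
      rcases hsep u huV v hvV with h' | h'
      · exact h'
      · linarith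
    -- then v ∈ cls x, contradicting disjointness
    have h1 : |v - x| ≤ |v - u| + |u - x| := abs_sub_le v u x
    have h2 : |v - u| = |u - v| := abs_sub_comm v u
    have hvx : |v - x| < a := hsmall v hvV x hx (by linarith)
    have hvmem : v ∈ cls x := hmem_cls.mpr ⟨hvV, hvx⟩
    exact (Set.disjoint_left.mp (hdisj x hx y hy hne) hvmem) hv
  have hdiam : ∀ x ∈ V, Metric.diam (cls x) ≤ a := by
    intro x hx
    refine Metric.diam_le_of_forall_dist_le ha.le ?_
    intro u hu v hv
    rcases hmem_cls.mp hu with ⟨huV, hux⟩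
    rcases hmem_cls.mp hv with ⟨hvV, hvx⟩
    have h1 : |u - v| ≤ |u - x| + |x - v| := abs_sub_le u x v
    have h2 : |x - v| = |v - x| := abs_sub_comm x v
    have : |u - v| < a := hsmall u huV v hvV (by linarith)
    rw [Real.dist_eq]
    exact this.le
  -- finiteness via floor map
  set F : ℝ → ℤ := fun x => ⌊(x - s) / A⌋ with hF
  have hFclose : ∀ x y : ℝ, F x = F y → |x - y| < A := by
    intro x y h
    have h1 : (F x : ℝ) ≤ (x - s) / A := Int.floor_le _
    have h2 : (x - s) / A < F x + 1 := Int.lt_floor_add_one _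
    have h3 : (F y : ℝ) ≤ (y - s) / A := Int.floor_le _
    have h4 : (y - s) / A < F y + 1 := Int.lt_floor_add_one _
    have hFxy : (F x : ℝ) = (F y : ℝ) := by exact_mod_cast h
    have hd : |(x - s) / A - (y - s) / A| < 1 := by
      rw [abs_lt]; constructor <;> nlinarith
    have hxy : (x - s) / A - (y - s) / A = (x - y) / A := by ring
    rw [hxy, abs_div, abs_of_pos hA, div_lt_one hA] at hd
    simpa using hd
  have hFim : (F '' V).Finite := by
    apply (Set.finite_Icc (0 : ℤ) ⌊(t - s) / A⌋).subset
    rintro k ⟨x, hx, rfl⟩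
    rcases hVI hx with ⟨hxs, hxt⟩
    constructor
    · exact Int.floor_nonneg.mpr (div_nonneg (by linarith) hA.le)
    · exact Int.floor_le_floor (by gcongr)
  have hfin : (cls '' V).Finite := by
    set g : ℤ → Set ℝ := fun k =>
      if hk : ∃ x ∈ V, F x = k then cls hk.choose else ∅ with hg
    apply Set.Finite.of_surjOn g _ hFim
    rintro C ⟨x, hx, rfl⟩
    refine ⟨F x, ⟨x, hx, rfl⟩, ?_⟩
    have hk : ∃ y ∈ V, F y = F x := ⟨x, hx, rfl⟩
    rw [hg]; simp only [dif_pos hk]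
    obtain ⟨hyV, hyF⟩ := hk.choose_spec
    have hclose : |hk.choose - x| < A := hFclose _ _ hyF
    have hax : |hk.choose - x| < a := by
      rcases hsep _ hyV x hx with h' | h'
      · exact h'
      · linarith
    exact heq _ hyV x hx hax
  -- assemble
  set Fs := hfin.toFinset with hFs
  refine ⟨Fs.card, fun i => ((Fs.equivFin.symm i : Fs) : Set ℝ), ?_, ?_, ?_, ?_, ?_⟩
  case _ =>
    intro i
    dsimp only
    obtain ⟨x, hx, hEq⟩ := Set.Finite.mem_toFinset hfin |>.mp (Fs.equivFin.symm i).2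
    rw [← hEq]
    exact hVopen.inter Metric.isOpen_ball
  case _ =>
    ext z
    simp only [Set.mem_iUnion]
    constructor
    · rintro ⟨i, hz⟩
      obtain ⟨x, hx, hEq⟩ := Set.Finite.mem_toFinset hfin |>.mp (Fs.equivFin.symm i).2
      rw [← hEq] at hz
      exact hcls_sub x hz
    · intro hz
      have hmem : cls z ∈ Fs := (Set.Finite.mem_toFinset hfin).mpr ⟨z, hz, rfl⟩
      refine ⟨Fs.equivFin ⟨cls z, hmem⟩, ?_⟩
      rw [Equiv.symm_apply_apply]
      exact hself z hz
  case _ =>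
    intro i j hij
    dsimp only
    obtain ⟨x, hx, hEqx⟩ := Set.Finite.mem_toFinset hfin |>.mp (Fs.equivFin.symm i).2
    obtain ⟨y, hy, hEqy⟩ := Set.Finite.mem_toFinset hfin |>.mp (Fs.equivFin.symm j).2
    rw [← hEqx, ← hEqy]
    apply hdisj x hx y hy
    intro hEq
    apply hij
    have : (Fs.equivFin.symm i : Set ℝ) = (Fs.equivFin.symm j : Set ℝ) := by
      rw [← hEqx, ← hEqy, hEq]
    exact Fs.equivFin.symm.injective (Subtype.ext this)
  case _ =>
    intro i
    dsimp only
    obtain ⟨x, hx, hEq⟩ := Set.Finite.mem_toFinset hfin |>.mp (Fs.equivFin.symm i).2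
    rw [← hEq]
    exact hdiam x hx
  case _ =>
    intro i j hij u hu v hv
    dsimp only at hu hv ⊢
    obtain ⟨x, hx, hEqx⟩ := Set.Finite.mem_toFinset hfin |>.mp (Fs.equivFin.symm i).2
    obtain ⟨y, hy, hEqy⟩ := Set.Finite.mem_toFinset hfin |>.mp (Fs.equivFin.symm j).2
    rw [← hEqx] at hu
    rw [← hEqy] at hv
    refine hfar x hx y hy ?_ u hu v hv
    intro hEq
    apply hij
    have : (Fs.equivFin.symm i : Set ℝ) = (Fs.equivFin.symm j : Set ℝ) := by
      rw [← hEqx, ← hEqy, hEq]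
    exact Fs.equivFin.symm.injective (Subtype.ext this)
end

section
/- Let a, A be positive real numbers with a ≤ A < 2a, set ε = (2a − A)/3, I = [0, 2a] and V = (0, ε) ∪ (a − ε, a) ∪ (2a − 2ε, 2a − ε). Then V is an open subset of I, for all x, y ∈ V either |x − y| < a or |x − y| > A, yet the diameter of V is strictly greater than a and I \ V contains no closed interval of length A. In particular, the hypothesis 2a ≤ A cannot be removed from the alternative 'diam V ≤ a or I \ V contains a closed interval of length A'. -/
/-- Counterexample showing that the hypothesis `2a ≤ A` cannot be removed from
Lemma 1: for `a ≤ A < 2a` there is an open `V ⊆ [0, 2a]` satisfying the separation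
condition, with `diam V > a` and no closed interval of length `A` in `[0,2a] \ V`. -/
theorem counterexample_without_2a_le_A
    (a A : ℝ) (ha : 0 < a) (haA : a ≤ A) (hA2a : A < 2 * a) :
    let ε := (2 * a - A) / 3
    let I := Set.Icc (0 : ℝ) (2 * a)
    let V := Set.Ioo (0 : ℝ) ε ∪ Set.Ioo (a - ε) a ∪ Set.Ioo (2 * a - 2 * ε) (2 * a - ε)
    IsOpen V ∧ V ⊆ I ∧
      (∀ x ∈ V, ∀ y ∈ V, |x - y| < a ∨ A < |x - y|) ∧
      a < Metric.diam V ∧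
      ¬ ∃ c : ℝ, Set.Icc c (c + A) ⊆ I \ V := by
  intro ε I V
  have hε : 0 < ε := by simp only [ε]; linarith
  have hε3 : 3 * ε ≤ a := by simp only [ε]; linarith
  have hAε : A = 2 * a - 3 * ε := by simp only [ε]; ring
  have hVI : V ⊆ I := by
    rintro x ((⟨h1, h2⟩ | ⟨h1, h2⟩) | ⟨h1, h2⟩) <;> exact ⟨by linarith, by linarith⟩
  refine ⟨(isOpen_Ioo.union isOpen_Ioo).union isOpen_Ioo, hVI, ?_, ?_, ?_⟩
  · rintro x ((⟨h1, h2⟩ | ⟨h1, h2⟩) | ⟨h1, h2⟩) y ((⟨k1, k2⟩ | ⟨k1, k2⟩) | ⟨k1, k2⟩) <;>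
      first
        | (left; rw [abs_lt]; exact ⟨by linarith, by linarith⟩)
        | (right; rw [abs_sub_comm, abs_of_pos (by linarith)]; linarith)
        | (right; rw [abs_of_pos (by linarith)]; linarith)
  · have hb : Bornology.IsBounded V := (Metric.isBounded_Icc 0 (2 * a)).subset hVI
    have hx : ε / 2 ∈ V := Or.inl (Or.inl ⟨by linarith, by linarith⟩)
    have hy : 2 * a - 3 * ε / 2 ∈ V := Or.inr ⟨by linarith, by linarith⟩
    have hd : dist (ε / 2) (2 * a - 3 * ε / 2) ≤ Metric.diam V :=
      Metric.dist_le_diam_of_mem hb hx hy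
    have : a < dist (ε / 2) (2 * a - 3 * ε / 2) := by
      rw [Real.dist_eq, abs_of_nonpos (by linarith)]; linarith
    linarith
  · rintro ⟨c, hc⟩
    have hA0 : 0 ≤ A := le_trans ha.le haA
    have h1 := hc (Set.left_mem_Icc.mpr (by linarith))
    have h2 := hc (Set.right_mem_Icc.mpr (by linarith))
    have hc0 : (0 : ℝ) ≤ c := h1.1.1
    have hc2a : c + A ≤ 2 * a := h2.1.2
    by_cases hcase : c ≤ a - ε / 2
    · have hmem : a - ε / 2 ∈ Set.Icc c (c + A) := ⟨hcase, by linarith⟩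
      exact (hc hmem).2 (Or.inl (Or.inr ⟨by linarith, by linarith⟩))
    · push_neg at hcase
      have hmem : 2 * a - 3 * ε / 2 ∈ Set.Icc c (c + A) := ⟨by linarith, by linarith⟩
      exact (hc hmem).2 (Or.inr ⟨by linarith, by linarith⟩)
end
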